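/- Let G be a connected graph on vertex set {1,...,n} with n ≥ 2 and Φ = (F_1,...,F_n) with |V(F_i)| ≥ 3 for all i. Then every minimum dominating set of G[Φ] is a restrained dominating set and an outer-connected dominating set, and conversely; i.e., the families of γ-sets, γ_r-sets and γ^{oc}-sets of G[Φ] coincide. The same strong equality holds among γ_t-sets, γ_{tr}-sets and γ_t^{oc}-sets of G[Φ]. -/

import Mathlib

open scoped Classical

/-- A dominating set: every vertex is in `D` or adjacent to a vertex of `D`. -/
def isDominatingSet {V : Type*} (H : SimpleGraph V) (D : Finset V) : Prop :=
  ∀ v : V, v ∈ D ∨ ∃ u ∈ D, H.Adj u v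

/-- A total dominating set: every vertex has a neighbor in `D`. -/
def isTotalDominatingSet {V : Type*} (H : SimpleGraph V) (D : Finset V) : Prop :=
  ∀ v : V, ∃ u ∈ D, H.Adj u v

def isMinimalDominatingSet {V : Type*} (H : SimpleGraph V) (D : Finset V) : Prop :=
  isDominatingSet H D ∧ ∀ D' : Finset V, D' ⊂ D → ¬ isDominatingSet H D'

def isMinimalTotalDominatingSet {V : Type*} (H : SimpleGraph V) (D : Finset V) : Prop :=
  isTotalDominatingSet H D ∧ ∀ D' : Finset V, D' ⊂ D → ¬ isTotalDominatingSet H D'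

noncomputable def domNum {V : Type*} (H : SimpleGraph V) : ℕ :=
  sInf {k | ∃ D : Finset V, isDominatingSet H D ∧ D.card = k}

noncomputable def totalDomNum {V : Type*} (H : SimpleGraph V) : ℕ :=
  sInf {k | ∃ D : Finset V, isTotalDominatingSet H D ∧ D.card = k}

noncomputable def upperDomNum {V : Type*} (H : SimpleGraph V) : ℕ :=
  sSup {k | ∃ D : Finset V, isMinimalDominatingSet H D ∧ D.card = k}

noncomputable def upperTotalDomNum {V : Type*} (H : SimpleGraph V) : ℕ :=
  sSup {k | ∃ D : Finset V, isMinimalTotalDominatingSet H D ∧ D.card = k}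

/-- Well (γ-)dominated: all minimal dominating sets have the same size. -/
def WellDominated {V : Type*} (H : SimpleGraph V) : Prop :=
  ∀ D₁ D₂ : Finset V, isMinimalDominatingSet H D₁ → isMinimalDominatingSet H D₂ →
    D₁.card = D₂.card

/-- Well γ_t-dominated: all minimal total dominating sets have the same size. -/
def WellTotalDominated {V : Type*} (H : SimpleGraph V) : Prop :=
  ∀ D₁ D₂ : Finset V, isMinimalTotalDominatingSet H D₁ → isMinimalTotalDominatingSet H D₂ →
    D₁.card = D₂.card

/-- Restrained dominating set: dominating and every vertex outside `D` has a
neighbor outside `D`. -/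
def isRestrainedDominatingSet {V : Type*} (H : SimpleGraph V) (D : Finset V) : Prop :=
  isDominatingSet H D ∧ ∀ v ∉ D, ∃ u ∉ D, H.Adj u v

/-- Outer-connected dominating set: dominating and the subgraph induced by the
complement of `D` is connected. -/
def isOuterConnectedDominatingSet {V : Type*} (H : SimpleGraph V) (D : Finset V) : Prop :=
  isDominatingSet H D ∧ (H.induce ((↑D : Set V)ᶜ)).Connected

def isTotalRestrainedDominatingSet {V : Type*} (H : SimpleGraph V) (D : Finset V) : Prop :=
  isTotalDominatingSet H D ∧ ∀ v ∉ D, ∃ u ∉ D, H.Adj u v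

def isTotalOuterConnectedDominatingSet {V : Type*} (H : SimpleGraph V) (D : Finset V) : Prop :=
  isTotalDominatingSet H D ∧ (H.induce ((↑D : Set V)ᶜ)).Connected

noncomputable def restrainedDomNum {V : Type*} (H : SimpleGraph V) : ℕ :=
  sInf {k | ∃ D : Finset V, isRestrainedDominatingSet H D ∧ D.card = k}

noncomputable def ocDomNum {V : Type*} (H : SimpleGraph V) : ℕ :=
  sInf {k | ∃ D : Finset V, isOuterConnectedDominatingSet H D ∧ D.card = k}

noncomputable def totalRestrainedDomNum {V : Type*} (H : SimpleGraph V) : ℕ :=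
  sInf {k | ∃ D : Finset V, isTotalRestrainedDominatingSet H D ∧ D.card = k}

noncomputable def totalOcDomNum {V : Type*} (H : SimpleGraph V) : ℕ :=
  sInf {k | ∃ D : Finset V, isTotalOuterConnectedDominatingSet H D ∧ D.card = k}

/-- Paired dominating set: dominating and the induced subgraph on `D` has a
perfect matching. -/
def isPairedDominatingSet {V : Type*} (H : SimpleGraph V) (D : Finset V) : Prop :=
  isDominatingSet H D ∧
    ∃ M : SimpleGraph.Subgraph (H.induce (↑D : Set V)), M.IsPerfectMatching

noncomputable def pairedDomNum {V : Type*} (H : SimpleGraph V) : ℕ :=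
  sInf {k | ∃ D : Finset V, isPairedDominatingSet H D ∧ D.card = k}

def isIndependentSet {V : Type*} (H : SimpleGraph V) (D : Finset V) : Prop :=
  ∀ u ∈ D, ∀ v ∈ D, ¬ H.Adj u v

def isMaximalIndependentSet {V : Type*} (H : SimpleGraph V) (D : Finset V) : Prop :=
  isIndependentSet H D ∧ ∀ D' : Finset V, D ⊂ D' → ¬ isIndependentSet H D'

/-- The independent domination number `i(H)`. -/
noncomputable def indepDomNum {V : Type*} (H : SimpleGraph V) : ℕ :=
  sInf {k | ∃ D : Finset V, isMaximalIndependentSet H D ∧ D.card = k}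

/-- The independence number `β₀(H)`. -/
noncomputable def indepNum {V : Type*} (H : SimpleGraph V) : ℕ :=
  sSup {k | ∃ D : Finset V, isIndependentSet H D ∧ D.card = k}

/-- An efficient dominating set: every vertex is dominated by exactly one
member of `D`. -/
def isEfficientDominatingSet {V : Type*} (H : SimpleGraph V) (D : Finset V) : Prop :=
  ∀ v : V, ∃! u : V, u ∈ D ∧ (u = v ∨ H.Adj u v)

/-- The generalized lexicographic product `G[Φ]` of a graph `G` on `Fin n` and a
family `Φ = (F 0, …, F (n-1))` of pairwise disjoint graphs: the `F i` are induced
subgraphs, and vertices in distinct `F i`, `F j` are adjacent iff `i j ∈ E(G)`. -/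
def GLP {n : ℕ} (G : SimpleGraph (Fin n)) {V : Fin n → Type*}
    (F : ∀ i, SimpleGraph (V i)) : SimpleGraph (Σ i, V i) where
  Adj x y := (x.1 ≠ y.1 ∧ G.Adj x.1 y.1) ∨ ∃ h : x.1 = y.1, (F y.1).Adj (h ▸ x.2) y.2
  symm := by
    constructor
    rintro ⟨i, a⟩ ⟨j, b⟩ (⟨hne, hadj⟩ | ⟨h, hadj⟩)
    · exact Or.inl ⟨fun hh => hne hh.symm, hadj.symm⟩
    · dsimp only at h
      subst h
      exact Or.inr ⟨rfl, hadj.symm⟩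
  loopless := by
    constructor
    rintro ⟨i, a⟩ (⟨hne, _⟩ | ⟨h, hadj⟩)
    · exact hne rfl
    · exact (F i).irrefl hadj

/-- The number of vertices of `D ∩ V(F i)`. -/
noncomputable def layerCount {n : ℕ} {V : Fin n → Type*} [∀ i, Fintype (V i)]
    (D : Finset (Σ i, V i)) (i : Fin n) : ℕ :=
  (D.filter (fun x => x.1 = i)).card


section Aux

variable {n : ℕ} {G : SimpleGraph (Fin n)} {V : Fin n → Type} [∀ i, Fintype (V i)]
  {F : ∀ i, SimpleGraph (V i)}

lemma GLP_adj {x y : Σ i, V i} :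
    (GLP G F).Adj x y ↔
      (x.1 ≠ y.1 ∧ G.Adj x.1 y.1) ∨ ∃ h : x.1 = y.1, (F y.1).Adj (h ▸ x.2) y.2 :=
  Iff.rfl

lemma exists_nbr (hn : 2 ≤ n) (hG : G.Connected) (i : Fin n) : ∃ j, G.Adj i j := by
  obtain ⟨j, hj⟩ : ∃ j : Fin n, j ≠ i := by
    rcases Nat.lt_or_ge i.val 1 with h | h
    · exact ⟨⟨1, by omega⟩, by intro he; apply_fun Fin.val at he; simp at he; omega⟩
    · exact ⟨⟨0, by omega⟩, by intro he; apply_fun Fin.val at he; simp at he; omega⟩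
  obtain ⟨w⟩ := hG.preconnected i j
  cases w with
  | nil => exact absurd rfl hj
  | cons h _ => exact ⟨_, h⟩

lemma swap_lemma (hV3 : ∀ i, 3 ≤ Fintype.card (V i)) {D : Finset (Σ i, V i)}
    {i j : Fin n} (hij : G.Adj i j) (hfull : ∀ x : V i, (⟨i, x⟩ : Σ i, V i) ∈ D)
    (a : V i) (c : V j) :
    ∃ D' : Finset (Σ i, V i), D'.card < D.card ∧
      (isDominatingSet (GLP G F) D → isDominatingSet (GLP G F) D') ∧
      (isTotalDominatingSet (GLP G F) D → isTotalDominatingSet (GLP G F) D') := by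
  classical
  set D' := (D.filter (fun x => ¬ x.1 = i)) ∪ {⟨i, a⟩, ⟨j, c⟩} with hD'def
  have hmem : ∀ x : Σ i, V i,
      x ∈ D' ↔ (x ∈ D ∧ ¬ x.1 = i) ∨ x = ⟨i, a⟩ ∨ x = ⟨j, c⟩ := by
    intro x
    simp [hD'def, Finset.mem_union, Finset.mem_filter, Finset.mem_insert,
      Finset.mem_singleton, or_assoc]
    tauto
  have hDa : (⟨i, a⟩ : Σ i, V i) ∈ D' := (hmem _).mpr (Or.inr (Or.inl rfl))
  have hDc : (⟨j, c⟩ : Σ i, V i) ∈ D' := (hmem _).mpr (Or.inr (Or.inr rfl))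
  have hcard3 : 3 ≤ (D.filter (fun x => x.1 = i)).card := by
    have hsub : (Finset.univ.image (fun x : V i => (⟨i, x⟩ : Σ i, V i))) ⊆
        D.filter (fun x => x.1 = i) := by
      intro x hx
      simp only [Finset.mem_image, Finset.mem_univ, true_and] at hx
      obtain ⟨y, rfl⟩ := hx
      exact Finset.mem_filter.mpr ⟨hfull y, rfl⟩
    calc 3 ≤ Fintype.card (V i) := hV3 i
      _ = (Finset.univ.image (fun x : V i => (⟨i, x⟩ : Σ i, V i))).card := by
          rw [Finset.card_image_of_injective _ sigma_mk_injective, Finset.card_univ]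
      _ ≤ _ := Finset.card_le_card hsub
  have hfc : (D.filter (fun x => x.1 = i)).card + (D.filter (fun x => ¬ x.1 = i)).card
      = D.card := Finset.card_filter_add_card_filter_not _
  have hlt : D'.card < D.card := by
    have h1 : D'.card ≤ (D.filter (fun x => ¬ x.1 = i)).card + 2 := by
      refine le_trans (Finset.card_union_le _ _) ?_
      have h2 : ({⟨i, a⟩, ⟨j, c⟩} : Finset (Σ i, V i)).card ≤ 2 :=
        le_trans (Finset.card_insert_le _ _) (by simp)
      omega
    omega
  have hu1 : ∀ {k : Fin n} (b : V k), ¬ k = i → ¬ G.Adj i k →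
      ∀ u : Σ i, V i, (GLP G F).Adj u ⟨k, b⟩ → ¬ u.1 = i := by
    intro k b hk hGik u hadj h
    rw [GLP_adj] at hadj
    rcases hadj with ⟨_, hadjG⟩ | ⟨he, _⟩
    · exact hGik (h ▸ hadjG)
    · exact hk (by rw [← h, he])
  refine ⟨D', hlt, ?_, ?_⟩
  · intro hdom ⟨k, b⟩
    by_cases hk : k = i
    · subst hk
      exact Or.inr ⟨⟨j, c⟩, hDc, Or.inl ⟨hij.symm.ne, hij.symm⟩⟩
    · by_cases hGik : G.Adj i k
      · exact Or.inr ⟨⟨i, a⟩, hDa, Or.inl ⟨hGik.ne, hGik⟩⟩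
      · rcases hdom ⟨k, b⟩ with hin | ⟨u, hu, hadj⟩
        · exact Or.inl ((hmem _).mpr (Or.inl ⟨hin, hk⟩))
        · exact Or.inr ⟨u, (hmem _).mpr (Or.inl ⟨hu, hu1 b hk hGik u hadj⟩), hadj⟩
  · intro htot ⟨k, b⟩
    by_cases hk : k = i
    · subst hk
      exact ⟨⟨j, c⟩, hDc, Or.inl ⟨hij.symm.ne, hij.symm⟩⟩
    · by_cases hGik : G.Adj i k
      · exact ⟨⟨i, a⟩, hDa, Or.inl ⟨hGik.ne, hGik⟩⟩
      · obtain ⟨u, hu, hadj⟩ := htot ⟨k, b⟩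
        exact ⟨u, (hmem _).mpr (Or.inl ⟨hu, hu1 b hk hGik u hadj⟩), hadj⟩

lemma miss_restrained (hn : 2 ≤ n) (hG : G.Connected) {D : Finset (Σ i, V i)}
    (hmiss : ∀ i : Fin n, ∃ x : V i, (⟨i, x⟩ : Σ i, V i) ∉ D) :
    ∀ v ∉ D, ∃ u ∉ D, (GLP G F).Adj u v := by
  rintro ⟨i, x⟩ _
  obtain ⟨j, hij⟩ := exists_nbr hn hG i
  obtain ⟨z, hz⟩ := hmiss j
  exact ⟨⟨j, z⟩, hz, Or.inl ⟨hij.symm.ne, hij.symm⟩⟩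

lemma miss_connected (hn : 2 ≤ n) (hG : G.Connected) {D : Finset (Σ i, V i)}
    (hmiss : ∀ i : Fin n, ∃ x : V i, (⟨i, x⟩ : Σ i, V i) ∉ D) :
    ((GLP G F).induce ((↑D : Set (Σ i, V i))ᶜ)).Connected := by
  have hmem : ∀ (v : Σ i, V i), v ∉ D → v ∈ ((↑D : Set (Σ i, V i))ᶜ) := by
    intro v hv; simpa using hv
  have key : ∀ {i j : Fin n} (_ : G.Walk i j) (x : V i) (y : V j)
      (hx : (⟨i, x⟩ : Σ i, V i) ∈ ((↑D : Set (Σ i, V i))ᶜ))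
      (hy : (⟨j, y⟩ : Σ i, V i) ∈ ((↑D : Set (Σ i, V i))ᶜ)),
      ((GLP G F).induce ((↑D : Set (Σ i, V i))ᶜ)).Reachable ⟨⟨i, x⟩, hx⟩ ⟨⟨j, y⟩, hy⟩ := by
    intro i j p
    induction p with
    | nil =>
      rename_i i0
      intro x y hx hy
      by_cases hxy : x = y
      · subst hxy
        exact SimpleGraph.Reachable.refl _
      · obtain ⟨k, hik⟩ := exists_nbr hn hG i0
        obtain ⟨z, hz⟩ := hmiss k
        have h1 : ((GLP G F).induce ((↑D : Set (Σ i, V i))ᶜ)).Adj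
            ⟨⟨i0, x⟩, hx⟩ ⟨⟨k, z⟩, hmem _ hz⟩ := Or.inl ⟨hik.ne, hik⟩
        have h2 : ((GLP G F).induce ((↑D : Set (Σ i, V i))ᶜ)).Adj
            ⟨⟨k, z⟩, hmem _ hz⟩ ⟨⟨i0, y⟩, hy⟩ := Or.inl ⟨hik.symm.ne, hik.symm⟩
        exact h1.reachable.trans h2.reachable
    | cons h p ih =>
      intro x y hx hy
      rename_i i' k j'
      obtain ⟨z, hz⟩ := hmiss k
      have h1 : ((GLP G F).induce ((↑D : Set (Σ i, V i))ᶜ)).Adj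
          ⟨⟨i', x⟩, hx⟩ ⟨⟨k, z⟩, hmem _ hz⟩ := Or.inl ⟨h.ne, h⟩
      exact h1.reachable.trans (ih z y (hmem _ hz) hy)
  rw [SimpleGraph.connected_iff]
  constructor
  · rintro ⟨⟨i, x⟩, hx⟩ ⟨⟨j, y⟩, hy⟩
    obtain ⟨p⟩ := hG.preconnected i j
    exact key p x y hx hy
  · obtain ⟨x, hx⟩ := hmiss ⟨0, by omega⟩
    exact ⟨⟨⟨_, x⟩, hmem _ hx⟩⟩

end Aux

/-- If `|V(F i)| ≥ 3` for all `i`, then the families of `γ`-sets, `γ_r`-sets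
and `γ^{oc}`-sets of `G[Φ]` coincide, and likewise the families of `γ_t`-sets,
`γ_{tr}`-sets and `γ_t^{oc}`-sets coincide (strong equality). -/
theorem stmt_11 {n : ℕ} (hn : 2 ≤ n) (G : SimpleGraph (Fin n)) (hG : G.Connected)
    (V : Fin n → Type) [∀ i, Fintype (V i)] (F : ∀ i, SimpleGraph (V i))
    (hV : ∀ i, 3 ≤ Fintype.card (V i)) :
    (∀ D : Finset (Σ i, V i),
      (isDominatingSet (GLP G F) D ∧ D.card = domNum (GLP G F)) ↔
      (isRestrainedDominatingSet (GLP G F) D ∧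
        D.card = restrainedDomNum (GLP G F))) ∧
    (∀ D : Finset (Σ i, V i),
      (isDominatingSet (GLP G F) D ∧ D.card = domNum (GLP G F)) ↔
      (isOuterConnectedDominatingSet (GLP G F) D ∧ D.card = ocDomNum (GLP G F))) ∧
    (∀ D : Finset (Σ i, V i),
      (isTotalDominatingSet (GLP G F) D ∧ D.card = totalDomNum (GLP G F)) ↔
      (isTotalRestrainedDominatingSet (GLP G F) D ∧
        D.card = totalRestrainedDomNum (GLP G F))) ∧
    (∀ D : Finset (Σ i, V i),
      (isTotalDominatingSet (GLP G F) D ∧ D.card = totalDomNum (GLP G F)) ↔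
      (isTotalOuterConnectedDominatingSet (GLP G F) D ∧
        D.card = totalOcDomNum (GLP G F))) := by
  classical
  set H := GLP G F with hH
  have hNE : ∀ i, Nonempty (V i) := fun i =>
    Fintype.card_pos_iff.mp (by have := hV i; omega)
  -- universal sets are (total) dominating
  have hUniv : isDominatingSet H Finset.univ := fun v => Or.inl (Finset.mem_univ v)
  have hUnivT : isTotalDominatingSet H Finset.univ := by
    rintro ⟨i, x⟩
    obtain ⟨j, hij⟩ := exists_nbr hn hG i
    obtain ⟨c⟩ := hNE j
    exact ⟨⟨j, c⟩, Finset.mem_univ _, Or.inl ⟨hij.symm.ne, hij.symm⟩⟩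
  -- minimum sets miss every layer
  have hmin_missD : ∀ D : Finset (Σ i, V i), isDominatingSet H D → D.card = domNum H →
      ∀ i, ∃ x : V i, (⟨i, x⟩ : Σ i, V i) ∉ D := by
    intro D hD hcard i
    by_contra hcon
    push_neg at hcon
    obtain ⟨j, hij⟩ := exists_nbr hn hG i
    obtain ⟨a⟩ := hNE i
    obtain ⟨c⟩ := hNE j
    obtain ⟨D', hlt, hd, _⟩ := swap_lemma hV hij hcon a c
    have hle : domNum H ≤ D'.card := Nat.sInf_le ⟨D', hd hD, rfl⟩
    omega
  have hmin_missT : ∀ D : Finset (Σ i, V i), isTotalDominatingSet H D →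
      D.card = totalDomNum H → ∀ i, ∃ x : V i, (⟨i, x⟩ : Σ i, V i) ∉ D := by
    intro D hD hcard i
    by_contra hcon
    push_neg at hcon
    obtain ⟨j, hij⟩ := exists_nbr hn hG i
    obtain ⟨a⟩ := hNE i
    obtain ⟨c⟩ := hNE j
    obtain ⟨D', hlt, _, ht⟩ := swap_lemma hV hij hcon a c
    have hle : totalDomNum H ≤ D'.card := Nat.sInf_le ⟨D', ht hD, rfl⟩
    omega
  -- a minimum dominating set exists
  obtain ⟨Dm, hDm, hDmc⟩ :
      ∃ D : Finset (Σ i, V i), isDominatingSet H D ∧ D.card = domNum H :=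
    Nat.sInf_mem (⟨_, Finset.univ, hUniv, rfl⟩ :
      Set.Nonempty {k | ∃ D : Finset (Σ i, V i), isDominatingSet H D ∧ D.card = k})
  obtain ⟨Dt, hDt, hDtc⟩ :
      ∃ D : Finset (Σ i, V i), isTotalDominatingSet H D ∧ D.card = totalDomNum H :=
    Nat.sInf_mem (⟨_, Finset.univ, hUnivT, rfl⟩ :
      Set.Nonempty {k | ∃ D : Finset (Σ i, V i), isTotalDominatingSet H D ∧ D.card = k})
  have hDmR : isRestrainedDominatingSet H Dm :=
    ⟨hDm, miss_restrained hn hG (hmin_missD Dm hDm hDmc)⟩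
  have hDmO : isOuterConnectedDominatingSet H Dm :=
    ⟨hDm, miss_connected hn hG (hmin_missD Dm hDm hDmc)⟩
  have hDtR : isTotalRestrainedDominatingSet H Dt :=
    ⟨hDt, miss_restrained hn hG (hmin_missT Dt hDt hDtc)⟩
  have hDtO : isTotalOuterConnectedDominatingSet H Dt :=
    ⟨hDt, miss_connected hn hG (hmin_missT Dt hDt hDtc)⟩
  -- equality of the numbers
  have hr_eq : restrainedDomNum H = domNum H := by
    apply le_antisymm
    · exact hDmc ▸ Nat.sInf_le ⟨Dm, hDmR, rfl⟩
    · obtain ⟨Dr, hDr, hc⟩ := Nat.sInf_mem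
        (⟨Dm.card, Dm, hDmR, rfl⟩ : Set.Nonempty
          {k | ∃ D : Finset (Σ i, V i), isRestrainedDominatingSet H D ∧ D.card = k})
      exact le_trans (Nat.sInf_le ⟨Dr, hDr.1, rfl⟩) (le_of_eq hc)
  have ho_eq : ocDomNum H = domNum H := by
    apply le_antisymm
    · exact hDmc ▸ Nat.sInf_le ⟨Dm, hDmO, rfl⟩
    · obtain ⟨Dr, hDr, hc⟩ := Nat.sInf_mem
        (⟨Dm.card, Dm, hDmO, rfl⟩ : Set.Nonempty
          {k | ∃ D : Finset (Σ i, V i), isOuterConnectedDominatingSet H D ∧ D.card = k})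
      exact le_trans (Nat.sInf_le ⟨Dr, hDr.1, rfl⟩) (le_of_eq hc)
  have htr_eq : totalRestrainedDomNum H = totalDomNum H := by
    apply le_antisymm
    · exact hDtc ▸ Nat.sInf_le ⟨Dt, hDtR, rfl⟩
    · obtain ⟨Dr, hDr, hc⟩ := Nat.sInf_mem
        (⟨Dt.card, Dt, hDtR, rfl⟩ : Set.Nonempty
          {k | ∃ D : Finset (Σ i, V i), isTotalRestrainedDominatingSet H D ∧ D.card = k})
      exact le_trans (Nat.sInf_le ⟨Dr, hDr.1, rfl⟩) (le_of_eq hc)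
  have hto_eq : totalOcDomNum H = totalDomNum H := by
    apply le_antisymm
    · exact hDtc ▸ Nat.sInf_le ⟨Dt, hDtO, rfl⟩
    · obtain ⟨Dr, hDr, hc⟩ := Nat.sInf_mem
        (⟨Dt.card, Dt, hDtO, rfl⟩ : Set.Nonempty
          {k | ∃ D : Finset (Σ i, V i), isTotalOuterConnectedDominatingSet H D ∧ D.card = k})
      exact le_trans (Nat.sInf_le ⟨Dr, hDr.1, rfl⟩) (le_of_eq hc)
  refine ⟨?_, ?_, ?_, ?_⟩
  · intro D
    constructor
    · rintro ⟨hD, hc⟩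
      exact ⟨⟨hD, miss_restrained hn hG (hmin_missD D hD hc)⟩, hc.trans hr_eq.symm⟩
    · rintro ⟨hD, hc⟩
      exact ⟨hD.1, hc.trans hr_eq⟩
  · intro D
    constructor
    · rintro ⟨hD, hc⟩
      exact ⟨⟨hD, miss_connected hn hG (hmin_missD D hD hc)⟩, hc.trans ho_eq.symm⟩
    · rintro ⟨hD, hc⟩
      exact ⟨hD.1, hc.trans ho_eq⟩
  · intro D
    constructor
    · rintro ⟨hD, hc⟩
      exact ⟨⟨hD, miss_restrained hn hG (hmin_missT D hD hc)⟩, hc.trans htr_eq.symm⟩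
    · rintro ⟨hD, hc⟩
      exact ⟨hD.1, hc.trans htr_eq⟩
  · intro D
    constructor
    · rintro ⟨hD, hc⟩
      exact ⟨⟨hD, miss_connected hn hG (hmin_missT D hD hc)⟩, hc.trans hto_eq.symm⟩
    · rintro ⟨hD, hc⟩
      exact ⟨hD.1, hc.trans hto_eq⟩
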